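/- Let S be a numerical semigroup with minimal generators β₀ < β₁ < … < β_g (g ≥ 2) satisfying the plane-branch inequalities n_iβ_i < β_{i+1}, and suppose l_{g−1} = gcd(β₀,…,β_{g−1}) = 2 and S ≠ ⟨2,3⟩. Then β_{g−1} < δ, where δ = #(ℕ \ S). -/

import Mathlib

open Finset

def pbCfun (β l : ℕ → ℕ) : ℕ → ℕ
  | 0 => 0
  | k+1 => pbCfun β l k + (l k / l (k+1) - 1) * β (k+1)

lemma pbLpos (β l : ℕ → ℕ) (hβpos : ∀ i, 0 < β i) (hl0 : l 0 = β 0)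
    (hlrec : ∀ i, l (i + 1) = Nat.gcd (l i) (β (i + 1))) : ∀ k, 0 < l k := by
  intro k
  induction k with
  | zero => rw [hl0]; exact hβpos 0
  | succ k ih => rw [hlrec]; exact Nat.gcd_pos_of_pos_left _ ih

lemma pbLdvd_succ (β l : ℕ → ℕ) (hlrec : ∀ i, l (i + 1) = Nat.gcd (l i) (β (i + 1))) :
    ∀ k, l (k+1) ∣ l k := fun k => (hlrec k) ▸ Nat.gcd_dvd_left _ _

lemma pbLdvd_mono (β l : ℕ → ℕ) (hlrec : ∀ i, l (i + 1) = Nat.gcd (l i) (β (i + 1))) :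
    ∀ j i, i ≤ j → l j ∣ l i := by
  intro j
  induction j with
  | zero => intro i hi; interval_cases i; exact dvd_rfl
  | succ j ih =>
    intro i hi
    rcases Nat.eq_or_lt_of_le hi with h | h
    · exact h ▸ dvd_rfl
    · exact (pbLdvd_succ β l hlrec j).trans (ih i (Nat.lt_succ_iff.mp h))

lemma pbLself (β l : ℕ → ℕ) (hl0 : l 0 = β 0)
    (hlrec : ∀ i, l (i + 1) = Nat.gcd (l i) (β (i + 1))) :
    ∀ i, l i ∣ β i := by
  intro i
  cases i with
  | zero => rw [hl0]
  | succ i => rw [hlrec]; exact Nat.gcd_dvd_right _ _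

lemma pbLdvdβ (β l : ℕ → ℕ) (hl0 : l 0 = β 0)
    (hlrec : ∀ i, l (i + 1) = Nat.gcd (l i) (β (i + 1))) :
    ∀ k i, i ≤ k → l k ∣ β i := fun k i h =>
  (pbLdvd_mono β l hlrec k i h).trans (pbLself β l hl0 hlrec i)

/-- Key representation lemma: every multiple of `l k` which is at least
`pbCfun β l k` lies in the submonoid generated by `β 0, …, β k`. -/
lemma pbRep (β l : ℕ → ℕ) (hβpos : ∀ i, 0 < β i) (hl0 : l 0 = β 0)
    (hlrec : ∀ i, l (i + 1) = Nat.gcd (l i) (β (i + 1))) :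
    ∀ k n, l k ∣ n → pbCfun β l k ≤ n →
      n ∈ (AddSubmonoid.closure {m : ℕ | ∃ i ≤ k, β i = m} : AddSubmonoid ℕ) := by
  intro k
  induction k with
  | zero =>
    intro n hdvd _
    obtain ⟨t, rfl⟩ := hdvd
    have hmem : β 0 ∈ (AddSubmonoid.closure {m : ℕ | ∃ i ≤ 0, β i = m} : AddSubmonoid ℕ) :=
      AddSubmonoid.subset_closure ⟨0, le_rfl, rfl⟩
    have := AddSubmonoid.nsmul_mem _ hmem t
    rwa [smul_eq_mul, mul_comm, ← hl0] at this
  | succ k ih =>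
    intro n hdvd hC
    have hed : l (k+1) ∣ l k := pbLdvd_succ β l hlrec k
    have heb : l (k+1) ∣ β (k+1) := (hlrec k) ▸ Nat.gcd_dvd_right _ _
    have hdpos : 0 < l k := pbLpos β l hβpos hl0 hlrec k
    have hepos : 0 < l (k+1) := pbLpos β l hβpos hl0 hlrec (k+1)
    set d := l k with hd
    set b := β (k+1) with hb
    set e := l (k+1) with he
    set m := d / e with hm
    obtain ⟨b', hb'⟩ := heb
    have hdem : d = e * m := (Nat.mul_div_cancel' hed).symm
    have hmpos : 0 < m := Nat.div_pos (Nat.le_of_dvd hdpos hed) hepos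
    obtain ⟨s, hs⟩ := hdvd
    have hbez : (e : ℤ) = d * Nat.gcdA d b + b * Nat.gcdB d b := by
      have := Nat.gcd_eq_gcd_ab d b
      rw [← hlrec k] at this
      exact_mod_cast this
    set A := Nat.gcdA d b
    set B := Nat.gcdB d b
    set u : ℤ := s * B with hu
    have hub : (d:ℤ) ∣ (n:ℤ) - u * b := by
      refine ⟨s * A, ?_⟩
      have : (n:ℤ) = e * s := by exact_mod_cast hs
      rw [this, hbez]; ring
    set j : ℤ := u % (m:ℤ) with hj
    have hj0 : 0 ≤ j := Int.emod_nonneg u (by exact_mod_cast hmpos.ne')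
    have hjm : j < (m:ℤ) := Int.emod_lt_of_pos u (by exact_mod_cast hmpos)
    have hujb : (d:ℤ) ∣ (u - j) * b := by
      have : u - j = (m:ℤ) * (u / m) := by rw [hj]; rw [Int.emod_def]; ring
      refine ⟨b' * (u / (m:ℤ)), ?_⟩
      rw [this]
      have hbz : (b:ℤ) = e * b' := by exact_mod_cast hb'
      have hdz : (d:ℤ) = e * m := by exact_mod_cast hdem
      rw [hbz, hdz]; ring
    have hnjb : (d:ℤ) ∣ (n:ℤ) - j * b := by
      have : (n:ℤ) - j * b = ((n:ℤ) - u * b) + (u - j) * b := by ring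
      rw [this]; exact dvd_add hub hujb
    set jn : ℕ := j.toNat with hjn
    have hjcast : (jn : ℤ) = j := Int.toNat_of_nonneg hj0
    have hjnm : jn ≤ m - 1 := by omega
    have hCk : pbCfun β l (k+1) = pbCfun β l k + (m - 1) * b := rfl
    have hjble : jn * b ≤ (m-1) * b := Nat.mul_le_mul_right _ hjnm
    have hjbn : jn * b ≤ n := by omega
    set n' : ℕ := n - jn * b with hn'
    have hCn' : pbCfun β l k ≤ n' := by omega
    have hdvd' : d ∣ n' := by
      have : (d:ℤ) ∣ (n':ℤ) := by
        have : (n':ℤ) = (n:ℤ) - j * b := by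
          rw [hn']; push_cast [hjbn]; rw [hjcast]
        rw [this]; exact hnjb
      exact_mod_cast this
    have h1 : n' ∈ (AddSubmonoid.closure {m : ℕ | ∃ i ≤ k, β i = m} : AddSubmonoid ℕ) :=
      ih n' hdvd' hCn'
    have hsub : {m : ℕ | ∃ i ≤ k, β i = m} ⊆ {m : ℕ | ∃ i ≤ k+1, β i = m} := by
      rintro x ⟨i, hi, rfl⟩; exact ⟨i, hi.trans (Nat.le_succ k), rfl⟩
    have h1' : n' ∈ (AddSubmonoid.closure {m : ℕ | ∃ i ≤ k+1, β i = m} : AddSubmonoid ℕ) :=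
      AddSubmonoid.closure_mono hsub h1
    have hbmem : b ∈ (AddSubmonoid.closure {m : ℕ | ∃ i ≤ k+1, β i = m} : AddSubmonoid ℕ) :=
      AddSubmonoid.subset_closure ⟨k+1, le_rfl, rfl⟩
    have h2 : jn * b ∈ (AddSubmonoid.closure {m : ℕ | ∃ i ≤ k+1, β i = m} : AddSubmonoid ℕ) := by
      have := AddSubmonoid.nsmul_mem _ hbmem jn
      rwa [smul_eq_mul] at this
    have : n' + jn * b = n := by omega
    exact this ▸ AddSubmonoid.add_mem _ h1' h2

lemma pbCtel (β l : ℕ → ℕ) (g : ℕ) (hβpos : ∀ i, 0 < β i) (hl0 : l 0 = β 0)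
    (hlrec : ∀ i, l (i + 1) = Nat.gcd (l i) (β (i + 1)))
    (hn : ∀ i, 1 ≤ i → i + 1 ≤ g → l (i - 1) * β i < l i * β (i + 1)) :
    ∀ k, 1 ≤ k → k + 1 ≤ g → l k * pbCfun β l k < l (k-1) * β k := by
  intro k
  induction k with
  | zero => omega
  | succ k ih =>
    intro _ hkg
    have hed : l (k+1) ∣ l k := pbLdvd_succ β l hlrec k
    have hepos : 0 < l (k+1) := pbLpos β l hβpos hl0 hlrec (k+1)
    have hdpos : 0 < l k := pbLpos β l hβpos hl0 hlrec k
    have hle : l (k+1) ≤ l k := Nat.le_of_dvd hdpos hed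
    have e1 : l (k+1) * ((l k / l (k+1) - 1) * β (k+1)) = (l k - l (k+1)) * β (k+1) := by
      rw [← mul_assoc, Nat.mul_sub, mul_one, Nat.mul_div_cancel' hed]
    have hCklt : pbCfun β l k < β (k+1) := by
      rcases Nat.eq_zero_or_pos k with hk0 | hk1
      · subst hk0; show pbCfun β l 0 < β 1; exact hβpos 1
      · have hT := ih hk1 (by omega)
        have hhn := hn k hk1 (by omega)
        exact Nat.lt_of_mul_lt_mul_left (hT.trans hhn)
    have h2 : l (k+1) * pbCfun β l k < l (k+1) * β (k+1) :=
      (Nat.mul_lt_mul_left hepos).mpr hCklt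
    show l (k+1) * pbCfun β l (k+1) < l k * β (k+1)
    have hexp : pbCfun β l (k+1) = pbCfun β l k + (l k / l (k+1) - 1) * β (k+1) := rfl
    rw [hexp, Nat.mul_add, e1]
    have h3 : (l k - l (k+1)) * β (k+1) + l (k+1) * β (k+1) = l k * β (k+1) := by
      rw [← Nat.add_mul]; congr 1; omega
    omega

open scoped Classical in
/-- Weight function of a subset `S ⊆ ℕ`:
`w0 S ℓ = #([0,ℓ) ∩ S) − #([0,ℓ) \ S)`. -/
noncomputable def w0 (S : Set ℕ) (l : ℕ) : ℤ :=
  (((Finset.range l).filter (fun k => k ∈ S)).card : ℤ) -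
    (((Finset.range l).filter (fun k => k ∉ S)).card : ℤ)

theorem beta_gm1_lt_delta (S : Set ℕ) (h0 : 0 ∈ S)
    (hadd : ∀ a b, a ∈ S → b ∈ S → a + b ∈ S)
    (hfin : (Sᶜ : Set ℕ).Finite) (c : ℕ)
    (hc : ∀ n, c ≤ n → n ∈ S)
    (hcmin : ∀ c', (∀ n, c' ≤ n → n ∈ S) → c ≤ c')
    (hsym : ∀ ℓ < c, ℓ ∈ S ↔ (c - 1 - ℓ) ∉ S)
    (δ : ℕ) (hδ : δ = (Sᶜ : Set ℕ).ncard)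
    (g : ℕ) (hg : 2 ≤ g) (β l : ℕ → ℕ)
    (hβpos : ∀ i, 0 < β i)
    (hβmono : ∀ i j, i < j → j ≤ g → β i < β j)
    (hgen : S = (AddSubmonoid.closure {n : ℕ | ∃ i ≤ g, β i = n} : AddSubmonoid ℕ))
    (hmin : ∀ i ≤ g,
      β i ∉ (AddSubmonoid.closure {n : ℕ | ∃ j ≤ g, j ≠ i ∧ β j = n} : AddSubmonoid ℕ))
    (hl0 : l 0 = β 0)
    (hlrec : ∀ i, l (i + 1) = Nat.gcd (l i) (β (i + 1)))
    (hn : ∀ i, 1 ≤ i → i + 1 ≤ g → l (i - 1) * β i < l i * β (i + 1))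
    (hlg1 : l (g - 1) = 2)
    (hne : S ≠ (AddSubmonoid.closure ({2, 3} : Set ℕ) : AddSubmonoid ℕ)) :
    β (g - 1) < δ := by
  classical
  -- Step 1: C (g-2) < β (g-1)
  have hCt : pbCfun β l (g-2) < β (g-1) := by
    rcases Nat.lt_or_ge g 3 with h2 | h3
    · have e : g - 2 = 0 := by omega
      rw [e]
      show 0 < β (g-1)
      exact hβpos _
    · have hT := pbCtel β l g hβpos hl0 hlrec hn (g-2) (by omega) (by omega)
      have hhn := hn (g-2) (by omega) (by omega)
      have e : g - 2 + 1 = g - 1 := by omega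
      have e' : g - 2 - 1 = g - 3 := by omega
      rw [e, e'] at hhn
      rw [e'] at hT
      exact Nat.lt_of_mul_lt_mul_left (hT.trans hhn)
  -- Step 2: l (g-2) ≠ 2, hence l (g-2) ≥ 4
  have hlg2ne : l (g-2) ≠ 2 := by
    intro h2
    have hdvdn : l (g-2) ∣ β (g-1) := by
      rw [h2, ← hlg1]; exact pbLself β l hl0 hlrec (g-1)
    have hmem := pbRep β l hβpos hl0 hlrec (g-2) (β (g-1)) hdvdn (le_of_lt hCt)
    have hsub : {m : ℕ | ∃ i ≤ g-2, β i = m} ⊆ {m : ℕ | ∃ j ≤ g, j ≠ g-1 ∧ β j = m} := by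
      rintro x ⟨i, hi, rfl⟩; exact ⟨i, by omega, by omega, rfl⟩
    exact hmin (g-1) (by omega) (AddSubmonoid.closure_mono hsub hmem)
  have hlg2ge4 : 4 ≤ l (g-2) := by
    have hdd : l (g-1) ∣ l (g-2) := pbLdvd_mono β l hlrec (g-1) (g-2) (by omega)
    have hp := pbLpos β l hβpos hl0 hlrec (g-2)
    rw [hlg1] at hdd
    rcases hdd with ⟨t, ht⟩
    omega
  -- Step 3: 2 β(g-1) < β g
  have hkey : 2 * β (g-1) < β g := by
    have hhn := hn (g-1) (by omega) (by omega)
    have e : g - 1 + 1 = g := by omega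
    have e' : g - 1 - 1 = g - 2 := by omega
    rw [e, e', hlg1] at hhn
    have h4 : 4 * β (g-1) ≤ l (g-2) * β (g-1) := Nat.mul_le_mul_right _ hlg2ge4
    omega
  -- Step 4: β 0 ≥ 4
  have hβ0 : 4 ≤ β 0 := by
    have hdd : l (g-2) ∣ l 0 := pbLdvd_mono β l hlrec (g-2) 0 (Nat.zero_le _)
    rw [hl0] at hdd
    rcases hdd with ⟨t, ht⟩
    have hb0 := hβpos 0
    rcases Nat.eq_zero_or_pos t with ht0 | ht1
    · rw [ht0, Nat.mul_zero] at ht; omega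
    · calc 4 ≤ l (g-2) := hlg2ge4
        _ ≤ l (g-2) * t := Nat.le_mul_of_pos_right _ ht1
        _ = β 0 := ht.symm
  -- Step 5: every nonzero element of S is ≥ β 0
  have hmem_ge : ∀ s ∈ S, s ≠ 0 → 4 ≤ s := by
    intro s hs
    have hs' : s ∈ (AddSubmonoid.closure {n : ℕ | ∃ i ≤ g, β i = n} : AddSubmonoid ℕ) := by
      rw [hgen] at hs; exact hs
    clear hs
    have key : s = 0 ∨ β 0 ≤ s := by
      induction hs' using AddSubmonoid.closure_induction with
      | mem y hy =>
        obtain ⟨i, hi, rfl⟩ := hy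
        right
        rcases Nat.eq_zero_or_pos i with h | h
        · rw [h]
        · exact le_of_lt (hβmono 0 i h hi)
      | zero => left; rfl
      | add x y hx hy ihx ihy =>
        rcases ihx with h | h
        · rcases ihy with h' | h'
          · left; omega
          · right; omega
        · right; omega
    intro hne0
    rcases key with h | h
    · exact absurd h hne0
    · omega
  have h2S : (2 : ℕ) ∉ S := fun h => by have := hmem_ge 2 h (by omega); omega
  -- Step 6: β i is even for i ≤ g-1
  have heven : ∀ i ≤ g - 1, 2 ∣ β i := by
    intro i hi
    rw [← hlg1]
    exact pbLdvdβ β l hl0 hlrec (g-1) i hi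
  -- Step 7: β g is odd
  have hoddg : ¬ 2 ∣ β g := by
    intro h2
    have hall : ∀ x ∈ (AddSubmonoid.closure {n : ℕ | ∃ i ≤ g, β i = n} : AddSubmonoid ℕ),
        2 ∣ x := by
      intro x hx
      induction hx using AddSubmonoid.closure_induction with
      | mem y hy =>
        obtain ⟨i, hi, rfl⟩ := hy
        rcases Nat.lt_or_ge i g with h | h
        · exact heven i (by omega)
        · have : i = g := by omega
          rw [this]; exact h2
      | zero => exact ⟨0, rfl⟩
      | add x y _ _ ihx ihy => omega
    have h1 : (2*c+1) ∈ S := hc _ (by omega)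
    have h1' : (2*c+1) ∈ (AddSubmonoid.closure {n : ℕ | ∃ i ≤ g, β i = n} : AddSubmonoid ℕ) := by
      rw [hgen] at h1; exact h1
    have := hall _ h1'
    omega
  -- Step 8: for odd x ∈ S, β g ≤ x and x - β g ∈ S
  have hsub2 : ∀ x ∈ S, ¬ 2 ∣ x → β g ≤ x ∧ x - β g ∈ S := by
    intro x hx
    have hx' : x ∈ (AddSubmonoid.closure {n : ℕ | ∃ i ≤ g, β i = n} : AddSubmonoid ℕ) := by
      rw [hgen] at hx; exact hx
    clear hx
    induction hx' using AddSubmonoid.closure_induction with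
    | mem y hy =>
      intro hodd
      obtain ⟨i, hi, rfl⟩ := hy
      rcases Nat.lt_or_ge i g with h | h
      · exact absurd (heven i (by omega)) hodd
      · have : i = g := by omega
        subst this
        exact ⟨le_rfl, by simpa using h0⟩
    | zero => intro h; exact absurd ⟨0, rfl⟩ h
    | add x y hx hy ihx ihy =>
      intro hoddxy
      have hxS : x ∈ S := by rw [hgen]; exact hx
      have hyS : y ∈ S := by rw [hgen]; exact hy
      rcases em (2 ∣ x) with hex | hox
      · have hoy : ¬ 2 ∣ y := by omega
        obtain ⟨hge, hmem⟩ := ihy hoy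
        refine ⟨by omega, ?_⟩
        have he : x + y - β g = x + (y - β g) := by omega
        rw [he]; exact hadd _ _ hxS hmem
      · obtain ⟨hge, hmem⟩ := ihx hox
        refine ⟨by omega, ?_⟩
        have he : x + y - β g = (x - β g) + y := by omega
        rw [he]; exact hadd _ _ hmem hyS
  -- Step 9: β g + 2 ∉ S, so β g + 2 < c
  have hbg2 : β g + 2 ∉ S := by
    intro h
    have hodd' : ¬ 2 ∣ (β g + 2) := by omega
    have := (hsub2 _ h hodd').2
    have he : β g + 2 - β g = 2 := by omega
    rw [he] at this
    exact h2S this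
  have hcge : β g + 2 < c := by
    by_contra h
    exact hbg2 (hc _ (by omega))
  -- Step 10: counting, c = 2 δ
  have hcpos : 0 < c := by omega
  set H := (Finset.range c).filter (fun k => k ∈ S) with hH
  set G := (Finset.range c).filter (fun k => k ∉ S) with hG
  have hsum : H.card + G.card = c := by
    rw [hH, hG, Finset.card_filter_add_card_filter_not, Finset.card_range]
  have hbij : H.card = G.card := by
    apply Finset.card_bij (fun a _ => c - 1 - a)
    · intro a ha
      rw [hH, Finset.mem_filter, Finset.mem_range] at ha
      rw [hG, Finset.mem_filter, Finset.mem_range]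
      exact ⟨by omega, (hsym a ha.1).mp ha.2⟩
    · intro a ha b hb hab
      rw [hH, Finset.mem_filter, Finset.mem_range] at ha hb
      omega
    · intro b hb
      rw [hG, Finset.mem_filter, Finset.mem_range] at hb
      refine ⟨c - 1 - b, ?_, by omega⟩
      rw [hH, Finset.mem_filter, Finset.mem_range]
      refine ⟨by omega, ?_⟩
      rw [hsym (c-1-b) (by omega)]
      have he : c - 1 - (c - 1 - b) = b := by omega
      rw [he]
      exact hb.2
  have hδG : δ = G.card := by
    rw [hδ]
    have hSc : (Sᶜ : Set ℕ) = ↑G := by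
      ext n
      simp only [Set.mem_compl_iff, hG, Finset.coe_filter, Set.mem_setOf_eq, Finset.mem_range]
      constructor
      · intro hn'
        refine ⟨?_, hn'⟩
        by_contra h
        exact hn' (hc n (by omega))
      · exact fun h => h.2
    rw [hSc, Set.ncard_coe_finset]
  -- Final arithmetic
  omega
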